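/- Let m ≥ 1, η : [0,∞) → [0,∞) measurable with support in [0,1], and σ_η = ∫_{ℝ^m} |y_1|² η(|y|) dy. Then for any vectors a, b ∈ ℝ^m, ∫_{B(0,1)} η(|z|) · min{a·z, 0} · (b·z) dz = (σ_η / 2) · (a·b). -/

import Mathlib

set_option maxHeartbeats 1000000
set_option linter.unnecessarySimpa false
open MeasureTheory
open scoped RealInnerProductSpace ENNReal

namespace Stmt5Aux

variable {m : ℕ}

local notation "ES" => EuclideanSpace ℝ (Fin m)

-- from h1/h2/h3 (will be merged): re-declare minimal ones needed
lemma lint_comp (L : ES ≃ₗᵢ[ℝ] ES) (g : ES → ℝ≥0∞) :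
    ∫⁻ z, g (L z) = ∫⁻ z, g z :=
  L.measurePreserving.lintegral_comp_emb L.toHomeomorph.measurableEmbedding g

lemma coord_eq_inner (i : Fin m) (z : ES) : z i = ⟪EuclideanSpace.single i (1:ℝ), z⟫ := by
  rw [EuclideanSpace.inner_single_left]; simp

lemma inner_reflection_left (K : Submodule ℝ ES) [K.HasOrthogonalProjection] (p z : ES) :
    ⟪p, Submodule.reflection K z⟫ = ⟪Submodule.reflection K p, z⟫ := by
  conv_lhs => rw [← Submodule.reflection_reflection K p]
  exact (Submodule.reflection K).inner_map_map (Submodule.reflection K p) z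

lemma exists_isometry_single' (p p' : ES) (hp : ‖p'‖ = ‖p‖) :
    ∃ L : ES ≃ₗᵢ[ℝ] ES, L p' = p :=
  ⟨Submodule.reflection (Submodule.span ℝ {p' - p})ᗮ, Submodule.reflection_sub hp⟩

lemma lintJ (η : ℝ → ℝ) (F : ℝ → ℝ → ℝ≥0∞) (p p' : ES) (h : ‖p‖ = ‖p'‖) :
    ∫⁻ z, F (η ‖z‖) ⟪p, z⟫ = ∫⁻ z, F (η ‖z‖) ⟪p', z⟫ := by
  obtain ⟨L, hL⟩ := exists_isometry_single' p p' h.symm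
  calc ∫⁻ z, F (η ‖z‖) ⟪p, z⟫
      = ∫⁻ z, F (η ‖L.symm z‖) ⟪p', L.symm z⟫ := by
        refine lintegral_congr fun z => ?_
        rw [L.symm.norm_map]
        congr 1
        rw [← hL, ← LinearIsometryEquiv.inner_map_map L p' (L.symm z),
          L.apply_symm_apply]
    _ = ∫⁻ z, F (η ‖z‖) ⟪p', z⟫ := lint_comp L.symm (fun z => F (η ‖z‖) ⟪p', z⟫)

/-- `J(a) = ‖a‖² ∫ η z_i²` for `a ≠ 0`. -/
lemma J_eq (η : ℝ → ℝ) (a : ES) (ha : a ≠ 0) (i : Fin m) :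
    ∫⁻ z : ES, ENNReal.ofReal (η ‖z‖ * ⟪a, z⟫^2)
      = ENNReal.ofReal (‖a‖^2) * ∫⁻ z : ES, ENNReal.ofReal (η ‖z‖ * (z i)^2) := by
  set p : ES := ‖a‖⁻¹ • a with hp
  have hna : ‖a‖ ≠ 0 := norm_ne_zero_iff.2 ha
  have hax : ∀ z : ES, ⟪a, z⟫ = ‖a‖ * ⟪p, z⟫ := by
    intro z
    rw [hp, real_inner_smul_left]
    field_simp
  have hpn : ‖p‖ = 1 := by
    rw [hp, norm_smul]
    simp [abs_of_nonneg (inv_nonneg.2 (norm_nonneg a)), inv_mul_cancel₀ hna]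
  calc ∫⁻ z : ES, ENNReal.ofReal (η ‖z‖ * ⟪a, z⟫^2)
      = ∫⁻ z : ES, ENNReal.ofReal (‖a‖^2) * ENNReal.ofReal (η ‖z‖ * ⟪p, z⟫^2) := by
        refine lintegral_congr fun z => ?_
        rw [← ENNReal.ofReal_mul (sq_nonneg _)]
        congr 1
        rw [hax z]; ring
    _ = ENNReal.ofReal (‖a‖^2) * ∫⁻ z : ES, ENNReal.ofReal (η ‖z‖ * ⟪p, z⟫^2) :=
        lintegral_const_mul' _ _ ENNReal.ofReal_ne_top
    _ = ENNReal.ofReal (‖a‖^2) * ∫⁻ z : ES, ENNReal.ofReal (η ‖z‖ * (z i)^2) := by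
        congr 1
        have := lintJ η (fun u x => ENNReal.ofReal (u * x^2)) p
          (EuclideanSpace.single i (1:ℝ)) (by simp [hpn])
        simpa only [← coord_eq_inner] using this


lemma lintI (η : ℝ → ℝ) (F : ℝ → ℝ → ℝ → ℝ≥0∞) (p q p' q' : ES)
    (hp : ‖p‖ = ‖p'‖) (hq : ‖q‖ = ‖q'‖) (hpq : ⟪p, q⟫ = 0) (hpq' : ⟪p', q'⟫ = 0) :
    ∫⁻ z, F (η ‖z‖) ⟪p, z⟫ ⟪q, z⟫ = ∫⁻ z, F (η ‖z‖) ⟪p', z⟫ ⟪q', z⟫ := by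
  obtain ⟨L, hL1, hL2⟩ : ∃ L : ES ≃ₗᵢ[ℝ] ES, L p' = p ∧ L q' = q := by
    set R₁ := Submodule.reflection (Submodule.span ℝ {p' - p})ᗮ with hR₁
    have h1 : R₁ p' = p := Submodule.reflection_sub hp.symm
    set q'' := R₁ q' with hq''
    have hq''n : ‖q''‖ = ‖q‖ := by rw [hq'']; rw [R₁.norm_map]; exact hq.symm
    have hq''p : ⟪p, q''⟫ = 0 := by
      rw [← h1, hq'', R₁.inner_map_map]; exact hpq'
    set R₂ := Submodule.reflection (Submodule.span ℝ {q'' - q})ᗮ with hR₂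
    have h2 : R₂ q'' = q := Submodule.reflection_sub hq''n
    have h3 : R₂ p = p := by
      apply Submodule.reflection_mem_subspace_eq_self
      rw [Submodule.mem_orthogonal_singleton_iff_inner_right, inner_sub_left]
      have e1 : ⟪q'', p⟫ = (0:ℝ) := by rw [real_inner_comm]; exact hq''p
      have e2 : ⟪q, p⟫ = (0:ℝ) := by rw [real_inner_comm]; exact hpq
      rw [e1, e2, sub_zero]
    exact ⟨R₁.trans R₂, by simp [LinearIsometryEquiv.trans_apply, h1, h3],
      by simp [LinearIsometryEquiv.trans_apply, ← hq'', h2]⟩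
  calc ∫⁻ z, F (η ‖z‖) ⟪p, z⟫ ⟪q, z⟫
      = ∫⁻ z, F (η ‖L.symm z‖) ⟪p', L.symm z⟫ ⟪q', L.symm z⟫ := by
        refine lintegral_congr fun z => ?_
        rw [L.symm.norm_map]
        congr 1
        · rw [← hL1, ← LinearIsometryEquiv.inner_map_map L p' (L.symm z),
            L.apply_symm_apply]
        · rw [← hL2, ← LinearIsometryEquiv.inner_map_map L q' (L.symm z),
            L.apply_symm_apply]
    _ = _ := lint_comp L.symm (fun z => F (η ‖z‖) ⟪p', z⟫ ⟪q', z⟫)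

lemma quarter (x y : ℝ) : x^2/4 ≤ |x*y| + |(x+y)*(y-x)|/2 := by
  have h1 : |(x+y)*(y-x)| = |y^2 - x^2| := by
    rw [show (x+y)*(y-x) = y^2 - x^2 from by ring]
  rw [h1, abs_mul]
  rcases le_total (x^2) (2*y^2) with h | h
  · have hxy : |x| ≤ 2 * |y| := by
      nlinarith [sq_abs x, sq_abs y, abs_nonneg x, abs_nonneg y]
    have h2 : x^2 ≤ 2 * (|x| * |y|) := by
      nlinarith [sq_abs x, abs_nonneg x, abs_nonneg y]
    have h4 := abs_nonneg (y^2 - x^2)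
    have h5 : (0:ℝ) ≤ |x| * |y| := mul_nonneg (abs_nonneg x) (abs_nonneg y)
    nlinarith
  · have h3 : |y^2 - x^2| = x^2 - y^2 := by
      rw [abs_sub_comm]; exact abs_of_nonneg (by nlinarith [sq_nonneg y])
    have := mul_nonneg (abs_nonneg x) (abs_nonneg y)
    rw [h3]; nlinarith [sq_nonneg y]

lemma measurable_coord (i : Fin m) : Measurable fun z : ES => z i := by
  have : Continuous fun z : ES => ⟪EuclideanSpace.single i (1:ℝ), z⟫ :=
    continuous_const.inner continuous_id
  have h := this.measurable
  simpa [EuclideanSpace.inner_single_left] using h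

lemma dim_ge_two (hm : 0 < m) (a b : ES) (ha : a ≠ 0) (hb : b ≠ 0)
    (hab : ⟪a, b⟫ = 0) : 1 < m := by
  by_contra h
  have hm1 : m = 1 := by omega
  subst hm1
  have hinner : ⟪a, b⟫ = a 0 * b 0 := by
    simp [PiLp.inner_apply, Fin.sum_univ_one, mul_comm]
  rw [hinner] at hab
  rcases mul_eq_zero.1 hab with h0 | h0
  · exact ha (PiLp.ext fun i => by rw [Subsingleton.elim i 0]; exact h0)
  · exact hb (PiLp.ext fun i => by rw [Subsingleton.elim i 0]; exact h0)

/-- The key non-integrability statement. -/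
lemma Itop (η : ℝ → ℝ) (hmeas : Measurable η) (hnn : ∀ t, 0 ≤ η t) (hm : 0 < m)
    (a b : ES) (ha : a ≠ 0) (hb : b ≠ 0)
    (hSe : ∫⁻ z : ES, ENNReal.ofReal (η ‖z‖ * (z ⟨0, hm⟩)^2) = ⊤) :
    ∫⁻ z : ES, ENNReal.ofReal (η ‖z‖ * |⟪a, z⟫ * ⟪b, z⟫|) = ⊤ := by
  have hηnn : ∀ z : ES, 0 ≤ η ‖z‖ := fun z => hnn _
  have Jtop : ∀ u : ES, u ≠ 0 → ∫⁻ z : ES, ENNReal.ofReal (η ‖z‖ * ⟪u, z⟫^2) = ⊤ := by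
    intro u hu
    rw [J_eq η u hu ⟨0, hm⟩, hSe, ENNReal.mul_top]
    exact (ENNReal.ofReal_pos.2 (pow_pos (norm_pos_iff.2 hu) 2)).ne'
  have hna : (0:ℝ) < ‖a‖ := norm_pos_iff.2 ha
  have hnb : (0:ℝ) < ‖b‖ := norm_pos_iff.2 hb
  set I := ∫⁻ z : ES, ENNReal.ofReal (η ‖z‖ * |⟪a, z⟫ * ⟪b, z⟫|) with hI
  by_cases hab : ⟪a, b⟫ = 0
  · -- orthogonal case, 45 degree trick
    have h2 : 1 < m := dim_ge_two hm a b ha hb hab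
    set i0 : Fin m := ⟨0, hm⟩
    set i1 : Fin m := ⟨1, h2⟩
    have hne : i0 ≠ i1 := by
      have : (0:ℕ) ≠ 1 := by norm_num
      exact fun hcon => this (by simpa [i0, i1, Fin.ext_iff] using hcon)
    set e0 : ES := EuclideanSpace.single i0 (1:ℝ) with he0
    set e1 : ES := EuclideanSpace.single i1 (1:ℝ) with he1
    have he0n : ‖e0‖ = 1 := by simp [he0]
    have he1n : ‖e1‖ = 1 := by simp [he1]
    have he00 : ⟪e0, e0⟫ = (1:ℝ) := by
      rw [real_inner_self_eq_norm_sq, he0n]; norm_num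
    have he11 : ⟪e1, e1⟫ = (1:ℝ) := by
      rw [real_inner_self_eq_norm_sq, he1n]; norm_num
    have he01 : ⟪e0, e1⟫ = (0:ℝ) := by
      rw [he0, he1, EuclideanSpace.inner_single_left]
      simp [EuclideanSpace.single_apply, hne]
    have he10 : ⟪e1, e0⟫ = (0:ℝ) := by rw [real_inner_comm]; exact he01
    set p : ES := ‖a‖⁻¹ • a with hp
    set q : ES := ‖b‖⁻¹ • b with hq
    have hpn : ‖p‖ = 1 := by
      rw [hp, norm_smul]
      simp [abs_of_nonneg (inv_nonneg.2 (norm_nonneg a)), inv_mul_cancel₀ hna.ne']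
    have hqn : ‖q‖ = 1 := by
      rw [hq, norm_smul]
      simp [abs_of_nonneg (inv_nonneg.2 (norm_nonneg b)), inv_mul_cancel₀ hnb.ne']
    have hpq : ⟪p, q⟫ = (0:ℝ) := by
      rw [hp, hq, real_inner_smul_left, real_inner_smul_right, hab]; ring
    have hax : ∀ z : ES, ⟪a, z⟫ = ‖a‖ * ⟪p, z⟫ := by
      intro z; rw [hp, real_inner_smul_left]; field_simp
    have hbx : ∀ z : ES, ⟪b, z⟫ = ‖b‖ * ⟪q, z⟫ := by
      intro z; rw [hq, real_inner_smul_left]; field_simp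
    -- factor out the norms
    have hfac : I = ENNReal.ofReal (‖a‖ * ‖b‖)
        * ∫⁻ z : ES, ENNReal.ofReal (η ‖z‖ * |⟪p, z⟫ * ⟪q, z⟫|) := by
      rw [hI, ← lintegral_const_mul' _ _ ENNReal.ofReal_ne_top]
      refine lintegral_congr fun z => ?_
      rw [← ENNReal.ofReal_mul (by positivity)]
      congr 1
      rw [hax z, hbx z]
      rw [show ‖a‖ * ⟪p,z⟫ * (‖b‖ * ⟪q,z⟫) = (‖a‖*‖b‖) * (⟪p,z⟫*⟪q,z⟫) from by ring,
        abs_mul, abs_of_nonneg (by positivity : (0:ℝ) ≤ ‖a‖*‖b‖)]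
      ring
    set P := ∫⁻ z : ES, ENNReal.ofReal (η ‖z‖ * |z i0 * z i1|) with hP
    have hPeq : ∫⁻ z : ES, ENNReal.ofReal (η ‖z‖ * |⟪p, z⟫ * ⟪q, z⟫|) = P := by
      rw [hP]
      have := lintI η (fun u x y => ENNReal.ofReal (u * |x * y|)) p q e0 e1
        (by rw [hpn, he0n]) (by rw [hqn, he1n]) hpq he01
      rw [this]
      exact lintegral_congr fun z => by rw [← coord_eq_inner, ← coord_eq_inner]
    -- 45 degree rotated pair
    set s : ℝ := (Real.sqrt 2)⁻¹ with hs
    have hs0 : (0:ℝ) < Real.sqrt 2 := Real.sqrt_pos.2 (by norm_num)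
    have hss : s * s = 1/2 := by
      rw [hs, ← mul_inv]
      rw [Real.mul_self_sqrt (by norm_num : (0:ℝ) ≤ 2)]
      norm_num
    set u : ES := s • (e0 + e1) with hu
    set v : ES := s • (e1 - e0) with hv
    have huu : ⟪u, u⟫ = (1:ℝ) := by
      rw [hu, real_inner_smul_left, real_inner_smul_right, inner_add_left,
        inner_add_right, inner_add_right, he00, he11, he01, he10]
      linear_combination 2 * hss
    have hvv : ⟪v, v⟫ = (1:ℝ) := by
      rw [hv, real_inner_smul_left, real_inner_smul_right, inner_sub_left,
        inner_sub_right, inner_sub_right, he00, he11, he01, he10]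
      linear_combination 2 * hss
    have huv : ⟪u, v⟫ = (0:ℝ) := by
      rw [hu, hv, real_inner_smul_left, real_inner_smul_right, inner_add_left,
        inner_sub_right, inner_sub_right, he00, he11, he01, he10]
      ring
    have hun : ‖u‖ = 1 := by
      have := real_inner_self_eq_norm_sq u
      rw [huu] at this
      nlinarith [norm_nonneg u]
    have hvn : ‖v‖ = 1 := by
      have := real_inner_self_eq_norm_sq v
      rw [hvv] at this
      nlinarith [norm_nonneg v]
    have huz : ∀ z : ES, ⟪u, z⟫ = s * (z i0 + z i1) := by
      intro z
      rw [hu, real_inner_smul_left, inner_add_left, ← coord_eq_inner, ← coord_eq_inner]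
    have hvz : ∀ z : ES, ⟪v, z⟫ = s * (z i1 - z i0) := by
      intro z
      rw [hv, real_inner_smul_left, inner_sub_left, ← coord_eq_inner, ← coord_eq_inner]
    have hProt : P = ∫⁻ z : ES, ENNReal.ofReal (η ‖z‖ * (|(z i0 + z i1) * (z i1 - z i0)|/2)) := by
      have h45 := lintI η (fun w x y => ENNReal.ofReal (w * |x * y|)) e0 e1 u v
        (by rw [he0n, hun]) (by rw [he1n, hvn]) he01 huv
      rw [hP]
      calc ∫⁻ z : ES, ENNReal.ofReal (η ‖z‖ * |z i0 * z i1|)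
          = ∫⁻ z, ENNReal.ofReal (η ‖z‖ * |⟪e0, z⟫ * ⟪e1, z⟫|) :=
            lintegral_congr fun z => by rw [← coord_eq_inner, ← coord_eq_inner]
        _ = ∫⁻ z, ENNReal.ofReal (η ‖z‖ * |⟪u, z⟫ * ⟪v, z⟫|) := h45
        _ = _ := by
            refine lintegral_congr fun z => ?_
            congr 1
            rw [huz z, hvz z]
            rw [show s * (z i0 + z i1) * (s * (z i1 - z i0))
              = (s*s) * ((z i0 + z i1) * (z i1 - z i0)) from by ring, hss]
            rw [abs_mul, abs_of_nonneg (by norm_num : (0:ℝ) ≤ 1/2)]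
            ring
    -- add the two expressions for P and bound from below
    have hmeas1 : Measurable fun z : ES =>
        ENNReal.ofReal (η ‖z‖ * |z i0 * z i1|) :=
      ((hmeas.comp measurable_norm).mul
        ((measurable_coord i0).mul (measurable_coord i1)).abs).ennreal_ofReal
    have hsum : P + P ≥ ∫⁻ z : ES, ENNReal.ofReal (η ‖z‖ * ((z i0)^2/4)) := by
      nth_rewrite 2 [hProt]
      rw [hP, ← lintegral_add_left hmeas1]
      refine lintegral_mono fun z => ?_
      rw [← ENNReal.ofReal_add (mul_nonneg (hηnn z) (abs_nonneg _))
        (mul_nonneg (hηnn z) (by positivity))]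
      apply ENNReal.ofReal_le_ofReal
      rw [← mul_add]
      exact mul_le_mul_of_nonneg_left (quarter (z i0) (z i1)) (hηnn z)
    have hq4 : ∫⁻ z : ES, ENNReal.ofReal (η ‖z‖ * ((z i0)^2/4)) = ⊤ := by
      have : ∀ z : ES, ENNReal.ofReal (η ‖z‖ * ((z i0)^2/4))
          = ENNReal.ofReal (4⁻¹ : ℝ) * ENNReal.ofReal (η ‖z‖ * (z i0)^2) := by
        intro z
        rw [← ENNReal.ofReal_mul (by norm_num)]
        congr 1; ring
      rw [lintegral_congr this, lintegral_const_mul' _ _ ENNReal.ofReal_ne_top, hSe,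
        ENNReal.mul_top (by simp)]
    have hPtop : P = ⊤ := by
      have : P + P = ⊤ := top_le_iff.1 (hq4 ▸ hsum)
      rcases ENNReal.add_eq_top.1 this with h | h <;> exact h
    rw [hfac, hPeq, hPtop, ENNReal.mul_top]
    exact (ENNReal.ofReal_pos.2 (by positivity)).ne'
  · -- non-orthogonal case: reflect the component of b orthogonal to a
    set κ : ℝ := ⟪a, b⟫ / ‖a‖^2 with hκ
    have hκ0 : κ ≠ 0 := div_ne_zero hab (by positivity)
    set c : ES := b - κ • a with hc
    have hac : ⟪a, c⟫ = 0 := by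
      rw [hc, inner_sub_right, real_inner_smul_right, real_inner_self_eq_norm_sq, hκ]
      field_simp; ring
    have hca : ⟪c, a⟫ = 0 := by rw [real_inner_comm]; exact hac
    have hbc : b - c = κ • a := by rw [hc]; abel
    have hcbc : ⟪c, b - c⟫ = 0 := by
      rw [hbc, real_inner_smul_right, hca, mul_zero]
    set R := Submodule.reflection (Submodule.span ℝ {c})ᗮ with hR
    have hRa : R a = a := Submodule.reflection_mem_subspace_eq_self
      (Submodule.mem_orthogonal_singleton_iff_inner_right.2 hca)
    have hRbc : R (b - c) = b - c := Submodule.reflection_mem_subspace_eq_self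
      (Submodule.mem_orthogonal_singleton_iff_inner_right.2 hcbc)
    have hRc : R c = -c := Submodule.reflection_orthogonalComplement_singleton_eq_neg c
    have hRb : R b = b - (2:ℝ) • c := by
      calc R b = R ((b - c) + c) := by rw [sub_add_cancel]
        _ = (b - c) + (-c) := by rw [map_add, hRbc, hRc]
        _ = b - (2:ℝ) • c := by rw [two_smul]; abel
    have hRb2 : R (b - (2:ℝ) • c) = b := by
      rw [map_sub, _root_.map_smul, hRb, hRc, smul_neg]
      abel
    set I₂ := ∫⁻ z : ES, ENNReal.ofReal (η ‖z‖ * |⟪a, z⟫ * ⟪b - (2:ℝ) • c, z⟫|) with hI₂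
    have hII₂ : I = I₂ := by
      rw [hI, hI₂]
      have := lint_comp R (fun z => ENNReal.ofReal (η ‖z‖ * |⟪a, z⟫ * ⟪b - (2:ℝ) • c, z⟫|))
      rw [← this]
      refine lintegral_congr fun z => ?_
      rw [R.norm_map, inner_reflection_left, inner_reflection_left, hRa, hRb2]
    have hsum2 : ∀ z : ES, ⟪b, z⟫ + ⟪b - (2:ℝ) • c, z⟫ = 2 * κ * ⟪a, z⟫ := by
      intro z
      rw [← inner_add_left]
      have h2 : b + (b - (2:ℝ) • c) = ((2:ℝ) * κ) • a := by
        rw [show b + (b - (2:ℝ) • c) = (2:ℝ) • (b - c) from by module, hbc, smul_smul]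
      rw [h2, real_inner_smul_left]
    have hmeas2 : Measurable fun z : ES =>
        ENNReal.ofReal (η ‖z‖ * |⟪a, z⟫ * ⟪b, z⟫|) :=
      ((hmeas.comp measurable_norm).mul
        (((continuous_const.inner continuous_id).measurable).mul
          ((continuous_const.inner continuous_id).measurable)).abs).ennreal_ofReal
    have hbound : I + I₂ ≥ ∫⁻ z : ES, ENNReal.ofReal (η ‖z‖ * ((2*|κ|) * ⟪a, z⟫^2)) := by
      rw [hI, hI₂, ← lintegral_add_left hmeas2]
      refine lintegral_mono fun z => ?_
      rw [← ENNReal.ofReal_add (mul_nonneg (hηnn z) (abs_nonneg _))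
        (mul_nonneg (hηnn z) (abs_nonneg _))]
      apply ENNReal.ofReal_le_ofReal
      rw [← mul_add]
      apply mul_le_mul_of_nonneg_left _ (hηnn z)
      have htri : |⟪a,z⟫ * ⟪b,z⟫ + ⟪a,z⟫ * ⟪b - (2:ℝ) • c, z⟫|
          ≤ |⟪a,z⟫ * ⟪b,z⟫| + |⟪a,z⟫ * ⟪b - (2:ℝ) • c, z⟫| := abs_add_le _ _
      have heq : ⟪a,z⟫ * ⟪b,z⟫ + ⟪a,z⟫ * ⟪b - (2:ℝ) • c, z⟫ = 2 * κ * ⟪a,z⟫^2 := by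
        rw [← mul_add, hsum2 z]; ring
      rw [heq] at htri
      calc 2 * |κ| * ⟪a,z⟫^2 = |2 * κ * ⟪a,z⟫^2| := by
            rw [abs_mul, abs_mul, abs_two, abs_of_nonneg (sq_nonneg ⟪a,z⟫)]
        _ ≤ _ := htri
    have hrt : ∫⁻ z : ES, ENNReal.ofReal (η ‖z‖ * ((2*|κ|) * ⟪a, z⟫^2)) = ⊤ := by
      have hpt : ∀ z : ES, ENNReal.ofReal (η ‖z‖ * ((2*|κ|) * ⟪a,z⟫^2))
          = ENNReal.ofReal (2*|κ|) * ENNReal.ofReal (η ‖z‖ * ⟪a,z⟫^2) := by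
        intro z
        rw [← ENNReal.ofReal_mul (by positivity)]
        congr 1; ring
      rw [lintegral_congr hpt, lintegral_const_mul' _ _ ENNReal.ofReal_ne_top,
        Jtop a ha, ENNReal.mul_top]
      exact (ENNReal.ofReal_pos.2 (mul_pos two_pos (abs_pos.2 hκ0))).ne'
    have htop : I + I₂ = ⊤ := top_le_iff.1 (hrt ▸ hbound)
    rw [← hII₂] at htop
    rcases ENNReal.add_eq_top.1 htop with h | h <;> exact h


lemma int_comp (L : ES ≃ₗᵢ[ℝ] ES) (g : ES → ℝ) :
    ∫ z, g (L z) = ∫ z, g z :=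
  L.measurePreserving.integral_comp L.toHomeomorph.measurableEmbedding g

lemma measurable_innerR (a : ES) : Measurable fun z : ES => ⟪a, z⟫ :=
  (continuous_const.inner continuous_id).measurable

lemma intJ (η : ℝ → ℝ) (G : ℝ → ℝ → ℝ) (p p' : ES) (h : ‖p‖ = ‖p'‖) :
    ∫ z, G (η ‖z‖) ⟪p, z⟫ = ∫ z, G (η ‖z‖) ⟪p', z⟫ := by
  obtain ⟨L, hL⟩ := exists_isometry_single' p p' h.symm
  calc ∫ z, G (η ‖z‖) ⟪p, z⟫
      = ∫ z, G (η ‖L.symm z‖) ⟪p', L.symm z⟫ := by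
        refine integral_congr_ae (Filter.Eventually.of_forall fun z => ?_)
        dsimp only
        rw [L.symm.norm_map]
        congr 1
        rw [← hL, ← LinearIsometryEquiv.inner_map_map L p' (L.symm z),
          L.apply_symm_apply]
    _ = ∫ z, G (η ‖z‖) ⟪p', z⟫ := int_comp L.symm (fun z => G (η ‖z‖) ⟪p', z⟫)

lemma int_off (g : ℝ → ℝ) (i j : Fin m) (hij : i ≠ j) :
    ∫ z : ES, g ‖z‖ * (z i * z j) = 0 := by
  set ei := EuclideanSpace.single i (1:ℝ)
  set ej := EuclideanSpace.single j (1:ℝ)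
  set R := Submodule.reflection (Submodule.span ℝ {ej})ᗮ with hR
  have h1 : R ei = ei := by
    apply Submodule.reflection_mem_subspace_eq_self
    rw [Submodule.mem_orthogonal_singleton_iff_inner_right]
    rw [EuclideanSpace.inner_single_left]
    simp [ei, EuclideanSpace.single_apply, hij.symm]
  have h2 : R ej = -ej := Submodule.reflection_orthogonalComplement_singleton_eq_neg ej
  have key : ∀ z : ES, g ‖R z‖ * ((R z) i * (R z) j) = -(g ‖z‖ * (z i * z j)) := by
    intro z
    have ci : (R z) i = z i := by
      rw [coord_eq_inner i (R z), inner_reflection_left, h1, ← coord_eq_inner]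
    have cj : (R z) j = -(z j) := by
      rw [coord_eq_inner j (R z), inner_reflection_left, h2, inner_neg_left,
        ← coord_eq_inner]
    rw [R.norm_map, ci, cj]; ring
  have h4' := int_comp R (fun z => g ‖z‖ * (z i * z j))
  have h3 : ∫ z : ES, g ‖R z‖ * ((R z) i * (R z) j)
      = -∫ z : ES, g ‖z‖ * (z i * z j) := by
    rw [← integral_neg]
    exact integral_congr_ae (Filter.Eventually.of_forall key)
  have h4 : ∫ z : ES, g ‖R z‖ * ((R z) i * (R z) j)
      = ∫ z : ES, g ‖z‖ * (z i * z j) := h4'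
  have := h4.symm.trans h3
  linarith

lemma int_diag (g : ℝ → ℝ) (i j : Fin m) :
    ∫ z : ES, g ‖z‖ * (z i * z i) = ∫ z : ES, g ‖z‖ * (z j * z j) := by
  have := intJ g (fun u x => u * (x * x)) (EuclideanSpace.single i (1:ℝ))
    (EuclideanSpace.single j (1:ℝ)) (by simp [EuclideanSpace.norm_single])
  simpa only [← coord_eq_inner] using this

lemma lint_coord_sq (η : ℝ → ℝ) (i j : Fin m) :
    ∫⁻ z : ES, ENNReal.ofReal (η ‖z‖ * (z i)^2)
      = ∫⁻ z : ES, ENNReal.ofReal (η ‖z‖ * (z j)^2) := by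
  have := lintJ η (fun u x => ENNReal.ofReal (u * x^2)) (EuclideanSpace.single i (1:ℝ))
    (EuclideanSpace.single j (1:ℝ)) (by simp)
  simpa only [← coord_eq_inner] using this

end Stmt5Aux

open Stmt5Aux

/-- `∫_{B(0,1)} η(|z|) min{a·z, 0} (b·z) dz = (σ_η/2) (a·b)` where
`σ_η = ∫_{ℝ^m} |y_1|² η(|y|) dy`. -/
theorem stmt5 (m : ℕ) (hm : 0 < m) (η : ℝ → ℝ)
    (hmeas : Measurable η) (hnn : ∀ t, 0 ≤ η t)
    (hsupp : Function.support η ⊆ Set.Icc 0 1)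
    (a b : EuclideanSpace ℝ (Fin m)) :
    ∫ z in Metric.closedBall (0 : EuclideanSpace ℝ (Fin m)) 1,
        η ‖z‖ * min ⟪a, z⟫ 0 * ⟪b, z⟫
      = (∫ y : EuclideanSpace ℝ (Fin m), |y ⟨0, hm⟩| ^ 2 * η ‖y‖) / 2
          * ⟪a, b⟫ := by
  classical
  have hηnn : ∀ z : EuclideanSpace ℝ (Fin m), 0 ≤ η ‖z‖ := fun z => hnn _
  have hηm : Measurable fun z : EuclideanSpace ℝ (Fin m) => η ‖z‖ :=
    hmeas.comp measurable_norm
  -- the integrand vanishes outside the ball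
  have hzero : ∀ z ∉ Metric.closedBall (0 : EuclideanSpace ℝ (Fin m)) 1,
      η ‖z‖ * min ⟪a, z⟫ 0 * ⟪b, z⟫ = 0 := by
    intro z hz
    simp only [Metric.mem_closedBall, dist_zero_right, not_le] at hz
    have h2 : η ‖z‖ = 0 := by
      by_contra h
      exact absurd ((hsupp h).2) (not_le.2 hz)
    rw [h2, zero_mul, zero_mul]
  rw [setIntegral_eq_integral_of_forall_compl_eq_zero hzero]
  by_cases ha : a = 0
  · simp [ha]
  by_cases hb : b = 0
  · simp [hb]
  set i0 : Fin m := ⟨0, hm⟩ with hi0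
  -- coordinate bound
  have hco : ∀ (i : Fin m) (z : EuclideanSpace ℝ (Fin m)), |z i| ≤ ‖z‖ := by
    intro i z
    rw [coord_eq_inner i z]
    have := abs_real_inner_le_norm (EuclideanSpace.single i (1:ℝ)) z
    simpa using this
  by_cases hfin : (∫⁻ z : EuclideanSpace ℝ (Fin m),
      ENNReal.ofReal (η ‖z‖ * (z i0)^2)) = ⊤
  · -- non-integrable case: both sides are zero
    have hσ0 : (∫ y : EuclideanSpace ℝ (Fin m), |y ⟨0, hm⟩| ^ 2 * η ‖y‖) = 0 := by
      apply integral_undef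
      intro hint
      have h1 := hint.hasFiniteIntegral
      rw [hasFiniteIntegral_iff_ofReal (Filter.Eventually.of_forall fun y =>
        mul_nonneg (by positivity) (hnn _))] at h1
      have h2 : ∫⁻ y : EuclideanSpace ℝ (Fin m),
          ENNReal.ofReal (|y ⟨0, hm⟩| ^ 2 * η ‖y‖)
          = ∫⁻ z : EuclideanSpace ℝ (Fin m), ENNReal.ofReal (η ‖z‖ * (z i0)^2) :=
        lintegral_congr fun y => by rw [sq_abs, mul_comm]
      rw [h2, hfin] at h1
      exact absurd h1 (lt_irrefl _)
    set f : EuclideanSpace ℝ (Fin m) → ℝ :=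
      fun z => η ‖z‖ * min ⟪a, z⟫ 0 * ⟪b, z⟫ with hf
    have hmf : Measurable f :=
      (hηm.mul ((measurable_innerR a).min measurable_const)).mul (measurable_innerR b)
    have hItop := Itop η hmeas hnn hm a b ha hb hfin
    set N := (LinearIsometryEquiv.neg ℝ :
      EuclideanSpace ℝ (Fin m) ≃ₗᵢ[ℝ] EuclideanSpace ℝ (Fin m)) with hN
    have hNz : ∀ z : EuclideanSpace ℝ (Fin m), N z = -z := fun z => rfl
    have hf2 : ∀ z : EuclideanSpace ℝ (Fin m),
        |f (N z)| + |f z| = η ‖z‖ * |⟪a, z⟫ * ⟪b, z⟫| := by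
      intro z
      rw [hNz z]
      simp only [hf, norm_neg, inner_neg_right]
      rcases le_total (⟪a, z⟫ : ℝ) 0 with h | h
      · rw [min_eq_left h, min_eq_right (neg_nonneg.2 h)]
        rw [mul_zero, zero_mul, abs_zero, zero_add, abs_mul, abs_mul, abs_mul,
          abs_of_nonneg (hηnn z)]
        ring
      · rw [min_eq_right h, min_eq_left (neg_nonpos.2 h)]
        rw [mul_zero, zero_mul, abs_zero, add_zero, abs_mul, abs_mul, abs_mul,
          abs_neg, abs_neg, abs_of_nonneg (hηnn z)]
        ring
    have hmabs : Measurable fun z : EuclideanSpace ℝ (Fin m) =>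
        ENNReal.ofReal |f z| := hmf.abs.ennreal_ofReal
    have hneg : ∫⁻ z : EuclideanSpace ℝ (Fin m), ENNReal.ofReal |f (N z)|
        = ∫⁻ z : EuclideanSpace ℝ (Fin m), ENNReal.ofReal |f z| :=
      lint_comp N (fun z => ENNReal.ofReal |f z|)
    have hAA : (∫⁻ z : EuclideanSpace ℝ (Fin m), ENNReal.ofReal |f z|)
        + (∫⁻ z : EuclideanSpace ℝ (Fin m), ENNReal.ofReal |f z|) = ⊤ := by
      nth_rewrite 1 [← hneg]
      rw [← lintegral_add_right _ hmabs]
      rw [lintegral_congr (fun z => ?_), hItop]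
      rw [← ENNReal.ofReal_add (abs_nonneg _) (abs_nonneg _), hf2 z]
    have hA : ∫⁻ z : EuclideanSpace ℝ (Fin m), ENNReal.ofReal |f z| = ⊤ := by
      rcases ENNReal.add_eq_top.1 hAA with h | h <;> exact h
    have hnint : ¬ Integrable f := by
      intro hint
      have h1 := hint.hasFiniteIntegral
      rw [hasFiniteIntegral_iff_norm] at h1
      have h2 : ∫⁻ z : EuclideanSpace ℝ (Fin m), ENNReal.ofReal ‖f z‖ = ⊤ := by
        rw [← hA]
        exact lintegral_congr fun z => by rw [Real.norm_eq_abs]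
      rw [h2] at h1
      exact absurd h1 (lt_irrefl _)
    rw [integral_undef hnint, hσ0]
    norm_num
  · -- integrable case
    have heach : ∀ i : Fin m, (∫⁻ z : EuclideanSpace ℝ (Fin m),
        ENNReal.ofReal (η ‖z‖ * (z i)^2))
        = ∫⁻ z : EuclideanSpace ℝ (Fin m), ENNReal.ofReal (η ‖z‖ * (z i0)^2) :=
      fun i => lint_coord_sq η i i0
    have hC : Integrable (fun z : EuclideanSpace ℝ (Fin m) => η ‖z‖ * ‖z‖^2) := by
      constructor
      · exact (hηm.mul (measurable_norm.pow measurable_const)).aestronglyMeasurable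
      · rw [hasFiniteIntegral_iff_ofReal (Filter.Eventually.of_forall fun z =>
          mul_nonneg (hηnn z) (sq_nonneg _))]
        have hnorm : ∀ z : EuclideanSpace ℝ (Fin m),
            ENNReal.ofReal (η ‖z‖ * ‖z‖^2)
            = ∑ i : Fin m, ENNReal.ofReal (η ‖z‖ * (z i)^2) := by
          intro z
          rw [← ENNReal.ofReal_sum_of_nonneg
            (fun i _ => mul_nonneg (hηnn z) (sq_nonneg _))]
          congr 1
          rw [← Finset.mul_sum]
          congr 1
          rw [EuclideanSpace.norm_eq,
            Real.sq_sqrt (Finset.sum_nonneg fun i _ => sq_nonneg _)]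
          exact Finset.sum_congr rfl fun i _ => by rw [Real.norm_eq_abs, sq_abs]
        rw [lintegral_congr hnorm,
          lintegral_finset_sum (f := fun i (z : EuclideanSpace ℝ (Fin m)) =>
            ENNReal.ofReal (η ‖z‖ * (z i)^2)) _ (fun i _ =>
            ((hηm.mul ((measurable_coord i).pow measurable_const)).ennreal_ofReal :
              Measurable fun z : EuclideanSpace ℝ (Fin m) => ENNReal.ofReal (η ‖z‖ * (z i)^2)))]
        rw [Finset.sum_congr rfl (fun i _ => heach i)]
        exact ENNReal.sum_lt_top.2 fun i _ => lt_top_iff_ne_top.2 hfin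
    -- domination helper
    have hdom : ∀ (φ : EuclideanSpace ℝ (Fin m) → ℝ),
        AEStronglyMeasurable φ volume → ∀ (cst : ℝ),
        (∀ z, |φ z| ≤ cst * (η ‖z‖ * ‖z‖^2)) → Integrable φ := by
      intro φ hφ cst hb'
      refine (hC.const_mul cst).mono' hφ (Filter.Eventually.of_forall fun z => ?_)
      rw [Real.norm_eq_abs]
      exact hb' z
    set f : EuclideanSpace ℝ (Fin m) → ℝ :=
      fun z => η ‖z‖ * min ⟪a, z⟫ 0 * ⟪b, z⟫ with hf
    have hmf : Measurable f :=
      (hηm.mul ((measurable_innerR a).min measurable_const)).mul (measurable_innerR b)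
    have hminb : ∀ z : EuclideanSpace ℝ (Fin m), |min ⟪a, z⟫ 0| ≤ ‖a‖ * ‖z‖ := by
      intro z
      rcases le_total (⟪a, z⟫ : ℝ) 0 with h | h
      · rw [min_eq_left h]
        exact abs_real_inner_le_norm a z
      · rw [min_eq_right h, abs_zero]
        positivity
    have hfint : Integrable f := by
      refine hdom f hmf.aestronglyMeasurable (‖a‖ * ‖b‖) fun z => ?_
      have h1 := hminb z
      have h2 := abs_real_inner_le_norm b z
      calc |f z| = η ‖z‖ * |min ⟪a, z⟫ 0| * |⟪b, z⟫| := by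
            rw [hf, abs_mul, abs_mul, abs_of_nonneg (hηnn z)]
        _ ≤ η ‖z‖ * (‖a‖ * ‖z‖) * (‖b‖ * ‖z‖) := by
            have h3 := abs_nonneg (min (⟪a, z⟫ : ℝ) 0)
            have h4 := abs_nonneg (⟪b, z⟫ : ℝ)
            have h5 := hηnn z
            have h6 : (0:ℝ) ≤ ‖b‖ * ‖z‖ := by positivity
            nlinarith [mul_le_mul_of_nonneg_left h1 h5,
              mul_le_mul_of_nonneg_left h2 (mul_nonneg h5 (by positivity : (0:ℝ) ≤ ‖a‖ * ‖z‖))]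
        _ = ‖a‖ * ‖b‖ * (η ‖z‖ * ‖z‖^2) := by ring
    have helem : ∀ i j : Fin m,
        Integrable (fun z : EuclideanSpace ℝ (Fin m) => η ‖z‖ * (z i * z j)) := by
      intro i j
      refine hdom _ ((hηm.mul
        ((measurable_coord i).mul (measurable_coord j))).aestronglyMeasurable) 1 fun z => ?_
      rw [one_mul, abs_mul, abs_mul, abs_of_nonneg (hηnn z)]
      have h1 := hco i z
      have h2 := hco j z
      have h3 := abs_nonneg (z i)
      have h4 := abs_nonneg (z j)
      have h5 := hηnn z
      have h6 : |z i| * |z j| ≤ ‖z‖^2 := by nlinarith [norm_nonneg z]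
      nlinarith
    have hgint : Integrable
        (fun z : EuclideanSpace ℝ (Fin m) => η ‖z‖ * (⟪a, z⟫ * ⟪b, z⟫)) := by
      refine hdom _ ((hηm.mul
        ((measurable_innerR a).mul (measurable_innerR b))).aestronglyMeasurable)
        (‖a‖ * ‖b‖) fun z => ?_
      rw [abs_mul, abs_mul, abs_of_nonneg (hηnn z)]
      have h1 := abs_real_inner_le_norm a z
      have h2 := abs_real_inner_le_norm b z
      have h3 := abs_nonneg (⟪a, z⟫ : ℝ)
      have h4 := abs_nonneg (⟪b, z⟫ : ℝ)
      have h5 := hηnn z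
      have h6 : |⟪a, z⟫| * |⟪b, z⟫| ≤ (‖a‖ * ‖z‖) * (‖b‖ * ‖z‖) := by
        have := mul_nonneg (norm_nonneg a) (norm_nonneg z)
        nlinarith
      calc η ‖z‖ * (|⟪a, z⟫| * |⟪b, z⟫|) ≤ η ‖z‖ * ((‖a‖ * ‖z‖) * (‖b‖ * ‖z‖)) :=
            mul_le_mul_of_nonneg_left h6 h5
        _ = ‖a‖ * ‖b‖ * (η ‖z‖ * ‖z‖^2) := by ring
    -- symmetrization
    set N := (LinearIsometryEquiv.neg ℝ :
      EuclideanSpace ℝ (Fin m) ≃ₗᵢ[ℝ] EuclideanSpace ℝ (Fin m)) with hN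
    have hNz : ∀ z : EuclideanSpace ℝ (Fin m), N z = -z := fun z => rfl
    have h2int : Integrable (fun z => f (N z)) :=
      (N.measurePreserving.integrable_comp_emb N.toHomeomorph.measurableEmbedding).2 hfint
    have hh : ∀ z : EuclideanSpace ℝ (Fin m),
        f z + f (N z) = η ‖z‖ * (⟪a, z⟫ * ⟪b, z⟫) := by
      intro z
      rw [hNz z]
      simp only [hf, norm_neg, inner_neg_right]
      rcases le_total (⟪a, z⟫ : ℝ) 0 with h | h
      · rw [min_eq_left h, min_eq_right (neg_nonneg.2 h)]
        ring
      · rw [min_eq_right h, min_eq_left (neg_nonpos.2 h)]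
        ring
    have hsplit : ∫ z : EuclideanSpace ℝ (Fin m), η ‖z‖ * (⟪a, z⟫ * ⟪b, z⟫)
        = 2 * ∫ z : EuclideanSpace ℝ (Fin m), f z := by
      calc ∫ z : EuclideanSpace ℝ (Fin m), η ‖z‖ * (⟪a, z⟫ * ⟪b, z⟫)
          = ∫ z : EuclideanSpace ℝ (Fin m), (f z + f (N z)) :=
            integral_congr_ae (Filter.Eventually.of_forall fun z => (hh z).symm)
        _ = (∫ z : EuclideanSpace ℝ (Fin m), f z)
            + ∫ z : EuclideanSpace ℝ (Fin m), f (N z) := integral_add hfint h2int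
        _ = 2 * ∫ z : EuclideanSpace ℝ (Fin m), f z := by
            rw [int_comp N f]; ring
    -- bilinear expansion
    have hinner_exp : ∀ x z : EuclideanSpace ℝ (Fin m), ⟪x, z⟫ = ∑ i, x i * z i := by
      intro x z
      simp [PiLp.inner_apply, mul_comm]
    have hexp : ∀ z : EuclideanSpace ℝ (Fin m), η ‖z‖ * (⟪a, z⟫ * ⟪b, z⟫)
        = ∑ i : Fin m, ∑ j : Fin m, (a i * b j) * (η ‖z‖ * (z i * z j)) := by
      intro z
      rw [hinner_exp a z, hinner_exp b z, Finset.sum_mul_sum, Finset.mul_sum]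
      refine Finset.sum_congr rfl fun i _ => ?_
      rw [Finset.mul_sum]
      refine Finset.sum_congr rfl fun j _ => ?_
      ring
    set S := ∫ z : EuclideanSpace ℝ (Fin m), η ‖z‖ * (z i0 * z i0) with hS
    have hdouble : ∫ z : EuclideanSpace ℝ (Fin m), η ‖z‖ * (⟪a, z⟫ * ⟪b, z⟫)
        = ∑ i : Fin m, ∑ j : Fin m, (a i * b j)
            * ∫ z : EuclideanSpace ℝ (Fin m), η ‖z‖ * (z i * z j) := by
      rw [integral_congr_ae (Filter.Eventually.of_forall hexp)]
      rw [integral_finset_sum _ (fun i _ =>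
        integrable_finset_sum _ (fun j _ => (helem i j).const_mul _))]
      refine Finset.sum_congr rfl fun i _ => ?_
      rw [integral_finset_sum _ (fun j _ => (helem i j).const_mul _)]
      exact Finset.sum_congr rfl fun j _ => integral_const_mul _ _
    have hval : ∀ i j : Fin m,
        (∫ z : EuclideanSpace ℝ (Fin m), η ‖z‖ * (z i * z j))
          = if i = j then S else 0 := by
      intro i j
      by_cases hij : i = j
      · subst hij
        rw [if_pos rfl, hS]
        exact int_diag η i i0
      · rw [if_neg hij]
        exact int_off η i j hij
    have hsum : ∑ i : Fin m, ∑ j : Fin m, (a i * b j)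
        * (∫ z : EuclideanSpace ℝ (Fin m), η ‖z‖ * (z i * z j)) = ⟪a, b⟫ * S := by
      rw [hinner_exp a b, Finset.sum_mul]
      refine Finset.sum_congr rfl fun i _ => ?_
      rw [Finset.sum_congr rfl (fun j _ => by rw [hval i j])]
      simp
    have hσS : (∫ y : EuclideanSpace ℝ (Fin m), |y ⟨0, hm⟩| ^ 2 * η ‖y‖) = S := by
      rw [hS]
      refine integral_congr_ae (Filter.Eventually.of_forall fun y => ?_)
      dsimp only
      rw [sq_abs]
      ring
    rw [hσS]
    have hfinal : 2 * ∫ z : EuclideanSpace ℝ (Fin m), f z = ⟪a, b⟫ * S := by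
      rw [← hsplit, hdouble, hsum]
    have : ∫ z : EuclideanSpace ℝ (Fin m), f z = S / 2 * ⟪a, b⟫ := by linarith
    exact this
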